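/- For every γ = (γ₁,γ₂,γ₃,γ₄) ∈ ℤ⁴, the following contiguity relations hold in ℂ[z₁,z₂,z₃,z₄]: z₁·F_γ = −z₃·F_{γ+e₁−e₃} + (γ₁+γ₃+1)·F_{γ+e₁}, and z₄·F_γ = −z₃·F_{γ+e₄−e₃} + (γ₃+γ₄+1)·F_{γ+e₄}. -/

import Mathlib

open MvPolynomial Finset

/-- The hypergeometric Γ-series `F_γ` for the lattice `B = ℤ⟨(1,-1,-1,1)⟩`,
as a polynomial in `ℂ[z₁,z₂,z₃,z₄]`. -/
noncomputable def GammaSeries (γ : Fin 4 → ℤ) : MvPolynomial (Fin 4) ℂ :=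
  ∑ n ∈ Finset.Icc (max (-γ 0) (-γ 3)) (min (γ 1) (γ 2)),
    MvPolynomial.C ((((γ 0 + n).toNat.factorial * (γ 1 - n).toNat.factorial *
        (γ 2 - n).toNat.factorial * (γ 3 + n).toNat.factorial : ℕ) : ℂ))⁻¹ *
      (X 0 ^ (γ 0 + n).toNat * X 1 ^ (γ 1 - n).toNat *
        X 2 ^ (γ 2 - n).toNat * X 3 ^ (γ 3 + n).toNat)

noncomputable def GS (a b c d : ℤ) : MvPolynomial (Fin 4) ℂ :=
  ∑ n ∈ Finset.Icc (max (-a) (-d)) (min b c),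
    MvPolynomial.C ((((a + n).toNat.factorial * (b - n).toNat.factorial *
        (c - n).toNat.factorial * (d + n).toNat.factorial : ℕ) : ℂ))⁻¹ *
      (X 0 ^ (a + n).toNat * X 1 ^ (b - n).toNat *
        X 2 ^ (c - n).toNat * X 3 ^ (d + n).toNat)

lemma GS_part1 (a b c d : ℤ) :
    X 0 * GS a b c d =
      -(X 2) * GS (a + 1) b (c - 1) d + C ((a + c + 1 : ℤ) : ℂ) * GS (a + 1) b c d := by
  have h1 : X (0 : Fin 4) * GS a b c d
      = ∑ n ∈ Finset.Icc (max (-(a + 1)) (-d)) (min b c),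
        C (((a + 1 + n : ℤ) : ℂ) /
            (((a + 1 + n).toNat.factorial * (b - n).toNat.factorial *
              (c - n).toNat.factorial * (d + n).toNat.factorial : ℕ) : ℂ)) *
          (X 0 ^ (a + 1 + n).toNat * X 1 ^ (b - n).toNat *
            X 2 ^ (c - n).toNat * X 3 ^ (d + n).toNat) := by
    rw [GS, Finset.mul_sum]
    have hsub : Finset.Icc (max (-a) (-d)) (min b c)
        ⊆ Finset.Icc (max (-(a + 1)) (-d)) (min b c) :=
      Finset.Icc_subset_Icc (max_le_max (by omega) le_rfl) le_rfl
    rw [← Finset.sum_subset hsub ?_]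
    · refine Finset.sum_congr rfl fun n hn => ?_
      rw [Finset.mem_Icc, max_le_iff, le_min_iff] at hn
      obtain ⟨⟨ha, hd⟩, hb, hc⟩ := hn
      have ha' : 0 ≤ a + n := by omega
      have key : (((a + 1 + n : ℤ) : ℂ) /
            (((a + 1 + n).toNat.factorial * (b - n).toNat.factorial *
              (c - n).toNat.factorial * (d + n).toNat.factorial : ℕ) : ℂ))
          = ((((a + n).toNat.factorial * (b - n).toNat.factorial *
              (c - n).toNat.factorial * (d + n).toNat.factorial : ℕ) : ℂ))⁻¹ := by
        have hD1 : ((((a + 1 + n).toNat.factorial * (b - n).toNat.factorial *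
                (c - n).toNat.factorial * (d + n).toNat.factorial : ℕ)) : ℂ) ≠ 0 :=
          Nat.cast_ne_zero.mpr (by positivity)
        have hD0 : ((((a + n).toNat.factorial * (b - n).toNat.factorial *
                (c - n).toNat.factorial * (d + n).toNat.factorial : ℕ)) : ℂ) ≠ 0 :=
          Nat.cast_ne_zero.mpr (by positivity)
        rw [div_eq_iff hD1, inv_mul_eq_div, eq_div_iff hD0,
          show (a + 1 + n).toNat = (a + n).toNat + 1 by omega, Nat.factorial_succ]
        have hcast : (((a + n).toNat : ℕ) : ℂ) = ((a + n : ℤ) : ℂ) := by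
          exact_mod_cast Int.toNat_of_nonneg ha'
        push_cast [hcast]
        ring
      rw [key, show (a + 1 + n).toNat = (a + n).toNat + 1 by omega, pow_succ]
      ring
    · intro n hn hn'
      rw [Finset.mem_Icc, max_le_iff, le_min_iff] at hn
      rw [Finset.mem_Icc, max_le_iff, le_min_iff] at hn'
      have : (a + 1 + n : ℤ) = 0 := by omega
      simp [this]
  have h2 : -(X (2 : Fin 4)) * GS (a + 1) b (c - 1) d
      = ∑ n ∈ Finset.Icc (max (-(a + 1)) (-d)) (min b c),
        C ((-((c - n : ℤ) : ℂ)) /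
            (((a + 1 + n).toNat.factorial * (b - n).toNat.factorial *
              (c - n).toNat.factorial * (d + n).toNat.factorial : ℕ) : ℂ)) *
          (X 0 ^ (a + 1 + n).toNat * X 1 ^ (b - n).toNat *
            X 2 ^ (c - n).toNat * X 3 ^ (d + n).toNat) := by
    rw [GS, Finset.mul_sum]
    have hsub : Finset.Icc (max (-(a + 1)) (-d)) (min b (c - 1))
        ⊆ Finset.Icc (max (-(a + 1)) (-d)) (min b c) :=
      Finset.Icc_subset_Icc le_rfl (min_le_min le_rfl (by omega))
    rw [← Finset.sum_subset hsub ?_]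
    · refine Finset.sum_congr rfl fun n hn => ?_
      rw [Finset.mem_Icc, max_le_iff, le_min_iff] at hn
      obtain ⟨⟨ha, hd⟩, hb, hc⟩ := hn
      have hc' : 0 ≤ c - 1 - n := by omega
      have key : ((-((c - n : ℤ) : ℂ)) /
            (((a + 1 + n).toNat.factorial * (b - n).toNat.factorial *
              (c - n).toNat.factorial * (d + n).toNat.factorial : ℕ) : ℂ))
          = -((((a + 1 + n).toNat.factorial * (b - n).toNat.factorial *
              (c - 1 - n).toNat.factorial * (d + n).toNat.factorial : ℕ) : ℂ))⁻¹ := by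
        have hD1 : ((((a + 1 + n).toNat.factorial * (b - n).toNat.factorial *
                (c - n).toNat.factorial * (d + n).toNat.factorial : ℕ)) : ℂ) ≠ 0 :=
          Nat.cast_ne_zero.mpr (by positivity)
        have hD0 : ((((a + 1 + n).toNat.factorial * (b - n).toNat.factorial *
                (c - 1 - n).toNat.factorial * (d + n).toNat.factorial : ℕ)) : ℂ) ≠ 0 :=
          Nat.cast_ne_zero.mpr (by positivity)
        rw [div_eq_iff hD1, neg_mul, neg_inj, inv_mul_eq_div, eq_div_iff hD0,
          show (c - n).toNat = (c - 1 - n).toNat + 1 by omega, Nat.factorial_succ]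
        have hcast : (((c - 1 - n).toNat : ℕ) : ℂ) = ((c - 1 - n : ℤ) : ℂ) := by
          exact_mod_cast Int.toNat_of_nonneg hc'
        push_cast [hcast]
        ring
      rw [key, show (c - n).toNat = (c - 1 - n).toNat + 1 by omega, pow_succ, map_neg]
      ring
    · intro n hn hn'
      rw [Finset.mem_Icc, max_le_iff, le_min_iff] at hn
      rw [Finset.mem_Icc, max_le_iff, le_min_iff] at hn'
      have : (c - n : ℤ) = 0 := by omega
      simp [this]
  have h3 : C ((a + c + 1 : ℤ) : ℂ) * GS (a + 1) b c d
      = ∑ n ∈ Finset.Icc (max (-(a + 1)) (-d)) (min b c),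
        C (((a + c + 1 : ℤ) : ℂ) /
            (((a + 1 + n).toNat.factorial * (b - n).toNat.factorial *
              (c - n).toNat.factorial * (d + n).toNat.factorial : ℕ) : ℂ)) *
          (X 0 ^ (a + 1 + n).toNat * X 1 ^ (b - n).toNat *
            X 2 ^ (c - n).toNat * X 3 ^ (d + n).toNat) := by
    rw [GS, Finset.mul_sum]
    refine Finset.sum_congr rfl fun n hn => ?_
    rw [div_eq_mul_inv, map_mul]
    ring
  rw [h1, h2, h3, ← Finset.sum_add_distrib]
  refine Finset.sum_congr rfl fun n hn => ?_
  rw [← add_mul, ← map_add, ← add_div]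
  congr 2
  push_cast
  ring

lemma GammaSeries_eq_GS (δ : Fin 4 → ℤ) (a b c d : ℤ)
    (h0 : δ 0 = a) (h1 : δ 1 = b) (h2 : δ 2 = c) (h3 : δ 3 = d) :
    GammaSeries δ = GS a b c d := by
  rw [GammaSeries, GS, h0, h1, h2, h3]

lemma GS_part2 (a b c d : ℤ) :
    X 3 * GS a b c d =
      -(X 2) * GS a b (c - 1) (d + 1) + C ((c + d + 1 : ℤ) : ℂ) * GS a b c (d + 1) := by
  have h1 : X (3 : Fin 4) * GS a b c d
      = ∑ n ∈ Finset.Icc (max (-a) (-(d + 1))) (min b c),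
        C (((d + 1 + n : ℤ) : ℂ) /
            (((a + n).toNat.factorial * (b - n).toNat.factorial *
              (c - n).toNat.factorial * (d + 1 + n).toNat.factorial : ℕ) : ℂ)) *
          (X 0 ^ (a + n).toNat * X 1 ^ (b - n).toNat *
            X 2 ^ (c - n).toNat * X 3 ^ (d + 1 + n).toNat) := by
    rw [GS, Finset.mul_sum]
    have hsub : Finset.Icc (max (-a) (-d)) (min b c)
        ⊆ Finset.Icc (max (-a) (-(d + 1))) (min b c) :=
      Finset.Icc_subset_Icc (max_le_max le_rfl (by omega)) le_rfl
    rw [← Finset.sum_subset hsub ?_]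
    · refine Finset.sum_congr rfl fun n hn => ?_
      rw [Finset.mem_Icc, max_le_iff, le_min_iff] at hn
      obtain ⟨⟨ha, hd⟩, hb, hc⟩ := hn
      have hd' : 0 ≤ d + n := by omega
      have key : (((d + 1 + n : ℤ) : ℂ) /
            (((a + n).toNat.factorial * (b - n).toNat.factorial *
              (c - n).toNat.factorial * (d + 1 + n).toNat.factorial : ℕ) : ℂ))
          = ((((a + n).toNat.factorial * (b - n).toNat.factorial *
              (c - n).toNat.factorial * (d + n).toNat.factorial : ℕ) : ℂ))⁻¹ := by
        have hD1 : ((((a + n).toNat.factorial * (b - n).toNat.factorial *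
                (c - n).toNat.factorial * (d + 1 + n).toNat.factorial : ℕ)) : ℂ) ≠ 0 :=
          Nat.cast_ne_zero.mpr (by positivity)
        have hD0 : ((((a + n).toNat.factorial * (b - n).toNat.factorial *
                (c - n).toNat.factorial * (d + n).toNat.factorial : ℕ)) : ℂ) ≠ 0 :=
          Nat.cast_ne_zero.mpr (by positivity)
        rw [div_eq_iff hD1, inv_mul_eq_div, eq_div_iff hD0,
          show (d + 1 + n).toNat = (d + n).toNat + 1 by omega, Nat.factorial_succ]
        have hcast : (((d + n).toNat : ℕ) : ℂ) = ((d + n : ℤ) : ℂ) := by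
          exact_mod_cast Int.toNat_of_nonneg hd'
        push_cast [hcast]
        ring
      rw [key, show (d + 1 + n).toNat = (d + n).toNat + 1 by omega, pow_succ]
      ring
    · intro n hn hn'
      rw [Finset.mem_Icc, max_le_iff, le_min_iff] at hn
      rw [Finset.mem_Icc, max_le_iff, le_min_iff] at hn'
      have : (d + 1 + n : ℤ) = 0 := by omega
      simp [this]
  have h2 : -(X (2 : Fin 4)) * GS a b (c - 1) (d + 1)
      = ∑ n ∈ Finset.Icc (max (-a) (-(d + 1))) (min b c),
        C ((-((c - n : ℤ) : ℂ)) /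
            (((a + n).toNat.factorial * (b - n).toNat.factorial *
              (c - n).toNat.factorial * (d + 1 + n).toNat.factorial : ℕ) : ℂ)) *
          (X 0 ^ (a + n).toNat * X 1 ^ (b - n).toNat *
            X 2 ^ (c - n).toNat * X 3 ^ (d + 1 + n).toNat) := by
    rw [GS, Finset.mul_sum]
    have hsub : Finset.Icc (max (-a) (-(d + 1))) (min b (c - 1))
        ⊆ Finset.Icc (max (-a) (-(d + 1))) (min b c) :=
      Finset.Icc_subset_Icc le_rfl (min_le_min le_rfl (by omega))
    rw [← Finset.sum_subset hsub ?_]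
    · refine Finset.sum_congr rfl fun n hn => ?_
      rw [Finset.mem_Icc, max_le_iff, le_min_iff] at hn
      obtain ⟨⟨ha, hd⟩, hb, hc⟩ := hn
      have hc' : 0 ≤ c - 1 - n := by omega
      have key : ((-((c - n : ℤ) : ℂ)) /
            (((a + n).toNat.factorial * (b - n).toNat.factorial *
              (c - n).toNat.factorial * (d + 1 + n).toNat.factorial : ℕ) : ℂ))
          = -((((a + n).toNat.factorial * (b - n).toNat.factorial *
              (c - 1 - n).toNat.factorial * (d + 1 + n).toNat.factorial : ℕ) : ℂ))⁻¹ := by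
        have hD1 : ((((a + n).toNat.factorial * (b - n).toNat.factorial *
                (c - n).toNat.factorial * (d + 1 + n).toNat.factorial : ℕ)) : ℂ) ≠ 0 :=
          Nat.cast_ne_zero.mpr (by positivity)
        have hD0 : ((((a + n).toNat.factorial * (b - n).toNat.factorial *
                (c - 1 - n).toNat.factorial * (d + 1 + n).toNat.factorial : ℕ)) : ℂ) ≠ 0 :=
          Nat.cast_ne_zero.mpr (by positivity)
        rw [div_eq_iff hD1, neg_mul, neg_inj, inv_mul_eq_div, eq_div_iff hD0,
          show (c - n).toNat = (c - 1 - n).toNat + 1 by omega, Nat.factorial_succ]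
        have hcast : (((c - 1 - n).toNat : ℕ) : ℂ) = ((c - 1 - n : ℤ) : ℂ) := by
          exact_mod_cast Int.toNat_of_nonneg hc'
        push_cast [hcast]
        ring
      rw [key, show (c - n).toNat = (c - 1 - n).toNat + 1 by omega, pow_succ, map_neg]
      ring
    · intro n hn hn'
      rw [Finset.mem_Icc, max_le_iff, le_min_iff] at hn
      rw [Finset.mem_Icc, max_le_iff, le_min_iff] at hn'
      have : (c - n : ℤ) = 0 := by omega
      simp [this]
  have h3 : C ((c + d + 1 : ℤ) : ℂ) * GS a b c (d + 1)
      = ∑ n ∈ Finset.Icc (max (-a) (-(d + 1))) (min b c),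
        C (((c + d + 1 : ℤ) : ℂ) /
            (((a + n).toNat.factorial * (b - n).toNat.factorial *
              (c - n).toNat.factorial * (d + 1 + n).toNat.factorial : ℕ) : ℂ)) *
          (X 0 ^ (a + n).toNat * X 1 ^ (b - n).toNat *
            X 2 ^ (c - n).toNat * X 3 ^ (d + 1 + n).toNat) := by
    rw [GS, Finset.mul_sum]
    refine Finset.sum_congr rfl fun n hn => ?_
    rw [div_eq_mul_inv, map_mul]
    ring
  rw [h1, h2, h3, ← Finset.sum_add_distrib]
  refine Finset.sum_congr rfl fun n hn => ?_
  rw [← add_mul, ← map_add, ← add_div]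
  congr 2
  push_cast
  ring

/-- The contiguity relations obtained from the homogeneity equations:
`z₁ F_γ = −z₃ F_{γ+e₁−e₃} + (γ₁+γ₃+1) F_{γ+e₁}` and
`z₄ F_γ = −z₃ F_{γ+e₄−e₃} + (γ₃+γ₄+1) F_{γ+e₄}`. -/
theorem gammaSeries_contiguity' (γ : Fin 4 → ℤ) :
    X 0 * GammaSeries γ =
      -(X 2) * GammaSeries (γ + Pi.single 0 1 - Pi.single 2 1) +
        C ((γ 0 + γ 2 + 1 : ℤ) : ℂ) * GammaSeries (γ + Pi.single 0 1) ∧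
    X 3 * GammaSeries γ =
      -(X 2) * GammaSeries (γ + Pi.single 3 1 - Pi.single 2 1) +
        C ((γ 2 + γ 3 + 1 : ℤ) : ℂ) * GammaSeries (γ + Pi.single 3 1) := by
  rw [GammaSeries_eq_GS γ (γ 0) (γ 1) (γ 2) (γ 3) rfl rfl rfl rfl,
    GammaSeries_eq_GS (γ + Pi.single 0 1 - Pi.single 2 1) (γ 0 + 1) (γ 1) (γ 2 - 1) (γ 3)
      (by simp [Pi.single_apply]) (by simp [Pi.single_apply])
      (by simp [Pi.single_apply]) (by simp [Pi.single_apply]),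
    GammaSeries_eq_GS (γ + Pi.single 0 1) (γ 0 + 1) (γ 1) (γ 2) (γ 3)
      (by simp [Pi.single_apply]) (by simp [Pi.single_apply])
      (by simp [Pi.single_apply]) (by simp [Pi.single_apply]),
    GammaSeries_eq_GS (γ + Pi.single 3 1 - Pi.single 2 1) (γ 0) (γ 1) (γ 2 - 1) (γ 3 + 1)
      (by simp [Pi.single_apply]) (by simp [Pi.single_apply])
      (by simp [Pi.single_apply]) (by simp [Pi.single_apply]),
    GammaSeries_eq_GS (γ + Pi.single 3 1) (γ 0) (γ 1) (γ 2) (γ 3 + 1)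
      (by simp [Pi.single_apply]) (by simp [Pi.single_apply])
      (by simp [Pi.single_apply]) (by simp [Pi.single_apply])]
  exact ⟨GS_part1 _ _ _ _, GS_part2 _ _ _ _⟩
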